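/- For all real a, b > 0, the series identity holds: (e^{a+b} - 1)ab - (e^a - 1)(e^b - 1)(a+b) = (a+b)·a·b · Σ_{n=1}^∞ Σ_{m=0}^{n-1} [m(n-m-1) / (n·(m+1)!·(n-m)!)] · a^m b^{n-m-1}, and each coefficient m(n-m-1)/(n(m+1)!(n-m)!) is nonnegative. -/
import Mathlib


open Real

private lemma summable_aux_norm (x : ℝ) :
    Summable (fun n : ℕ => ‖x ^ n / (Nat.factorial (n + 1))‖) := by
  apply Summable.of_nonneg_of_le (fun n => norm_nonneg _) _
    (Real.summable_pow_div_factorial |x|)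
  intro n
  rw [norm_div, norm_pow, Real.norm_eq_abs]
  have h1 : ‖((Nat.factorial (n+1) : ℝ))‖ = (Nat.factorial (n+1) : ℝ) := by
    rw [Real.norm_eq_abs, abs_of_nonneg]; positivity
  rw [h1]
  have hfac : (Nat.factorial n : ℝ) ≤ (Nat.factorial (n+1) : ℝ) := by
    exact_mod_cast Nat.factorial_le (Nat.le_succ n)
  have hpos : (0:ℝ) < Nat.factorial n := by positivity
  exact div_le_div_of_nonneg_left (by positivity) hpos hfac

private lemma summable_aux (x : ℝ) :
    Summable (fun n : ℕ => x ^ n / (Nat.factorial (n + 1))) :=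
  (summable_aux_norm x).of_norm

private lemma exp_sub_one_eq (x : ℝ) :
    Real.exp x - 1 = x * ∑' n : ℕ, x ^ n / (Nat.factorial (n + 1)) := by
  have hx : Real.exp x = ∑' n : ℕ, x ^ n / (Nat.factorial n) := by
    rw [Real.exp_eq_exp_ℝ, NormedSpace.exp_eq_tsum_div]
  rw [hx, Summable.tsum_eq_zero_add (Real.summable_pow_div_factorial x)]
  rw [← tsum_mul_left]
  have : ∀ n : ℕ, x ^ (n + 1) / (Nat.factorial (n + 1)) =
      x * (x ^ n / (Nat.factorial (n + 1))) := by
    intro n; rw [pow_succ]; ring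
  simp only [pow_zero, Nat.factorial_zero, Nat.cast_one, div_one, this]
  ring

private lemma coeff_eq (n m : ℕ) (hm : m ≤ n) :
    ((n.choose m : ℝ)) / (Nat.factorial (n + 1)) -
      1 / ((Nat.factorial (m + 1)) * (Nat.factorial (n - m + 1))) =
    ((m * (n - m) : ℕ) : ℝ) /
      ((n + 1) * (Nat.factorial (m + 1)) * (Nat.factorial (n - m + 1))) := by
  obtain ⟨k, rfl⟩ := Nat.exists_eq_add_of_le hm
  have hk : m + k - m = k := by omega
  rw [hk]
  rw [Nat.cast_choose ℝ (by omega : m ≤ m + k), hk]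
  have h1 : (Nat.factorial (m + k + 1) : ℝ) = (m + k + 1) * (Nat.factorial (m + k)) := by
    rw [Nat.factorial_succ]; push_cast; ring
  have h2 : (Nat.factorial (m + 1) : ℝ) = (m + 1) * (Nat.factorial m) := by
    rw [Nat.factorial_succ]; push_cast; ring
  have h3 : (Nat.factorial (k + 1) : ℝ) = (k + 1) * (Nat.factorial k) := by
    rw [Nat.factorial_succ]; push_cast; ring
  have f1 : (Nat.factorial (m + k) : ℝ) ≠ 0 := by positivity
  have f2 : (Nat.factorial m : ℝ) ≠ 0 := by positivity
  have f3 : (Nat.factorial k : ℝ) ≠ 0 := by positivity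
  have f4 : ((m : ℝ) + k + 1) ≠ 0 := by positivity
  have f5 : ((m : ℝ) + 1) ≠ 0 := by positivity
  have f6 : ((k : ℝ) + 1) ≠ 0 := by positivity
  rw [h1, h2, h3]
  push_cast
  field_simp
  ring

theorem exp_key_series_identity (a b : ℝ) (ha : 0 < a) (hb : 0 < b) :
    ((Real.exp (a + b) - 1) * a * b - (Real.exp a - 1) * (Real.exp b - 1) * (a + b) =
      (a + b) * a * b *
        ∑' n : ℕ, ∑ m ∈ Finset.range (n + 1),
          ((m * (n - m) : ℕ) : ℝ) /
            ((n + 1) * (Nat.factorial (m + 1)) * (Nat.factorial (n + 1 - m))) *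
            a ^ m * b ^ (n - m)) ∧
    ∀ n : ℕ, ∀ m ∈ Finset.range (n + 1),
      0 ≤ ((m * (n - m) : ℕ) : ℝ) /
        ((n + 1) * (Nat.factorial (m + 1)) * (Nat.factorial (n + 1 - m))) := by
  constructor
  · set u := fun i : ℕ => a ^ i / (Nat.factorial (i + 1)) with hu_def
    set v := fun j : ℕ => b ^ j / (Nat.factorial (j + 1)) with hv_def
    have hG : Summable (fun n : ℕ => ∑ m ∈ Finset.range (n + 1), u m * v (n - m)) :=
      (summable_norm_sum_mul_range_of_summable_norm (summable_aux_norm a)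
        (summable_aux_norm b)).of_norm
    have hw : Summable (fun n : ℕ => (a + b) ^ n / (Nat.factorial (n + 1))) :=
      summable_aux (a + b)
    have hmul : (∑' i, u i) * (∑' j, v j) =
        ∑' n : ℕ, ∑ m ∈ Finset.range (n + 1), u m * v (n - m) :=
      tsum_mul_tsum_eq_tsum_sum_range_of_summable_norm (summable_aux_norm a)
        (summable_aux_norm b)
    have key : (∑' n : ℕ, (a + b) ^ n / (Nat.factorial (n + 1))) -
        (∑' i, u i) * (∑' j, v j) =
        ∑' n : ℕ, ∑ m ∈ Finset.range (n + 1),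
          ((m * (n - m) : ℕ) : ℝ) /
            ((n + 1) * (Nat.factorial (m + 1)) * (Nat.factorial (n + 1 - m))) *
            a ^ m * b ^ (n - m) := by
      rw [hmul, ← Summable.tsum_sub hw hG]
      apply tsum_congr
      intro n
      rw [add_pow, Finset.sum_div, ← Finset.sum_sub_distrib]
      apply Finset.sum_congr rfl
      intro m hm
      have hmn : m ≤ n := Nat.lt_succ_iff.mp (Finset.mem_range.mp hm)
      have hsub : n + 1 - m = n - m + 1 := by omega
      rw [hsub]
      have h := coeff_eq n m hmn
      simp only [hu_def, hv_def]
      linear_combination a ^ m * b ^ (n - m) * h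
    rw [exp_sub_one_eq (a + b), exp_sub_one_eq a, exp_sub_one_eq b, ← key]
    ring
  · intro n m _
    positivity
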